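/- Let g = [[A,B],[C,D]] ∈ SO(n,n|ℤ) satisfy: C = [[C₁₁, 0],[C₂₁, 0]] and D = [[−C₁₁Z, D₁₂],[−C₂₁Z, D₂₂]] in (2p, n−2p) block form, where Z is a 2p×2p skew-symmetric real matrix, and suppose there exists a skew-symmetric θ with Cθ + D invertible. Then Z is unique (determined by C and D) and all entries of Z are rational numbers. -/
import Mathlib


open Matrix

private lemma matrix_rank_add_le' {m n : Type*} [Fintype m] [Fintype n]
    (A B : Matrix m n ℝ) : (A + B).rank ≤ A.rank + B.rank := by
  have hle : LinearMap.range (A + B).mulVecLin ≤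
      LinearMap.range A.mulVecLin ⊔ LinearMap.range B.mulVecLin := by
    rintro x ⟨v, rfl⟩
    exact Submodule.mem_sup.2 ⟨A.mulVec v, ⟨v, rfl⟩, B.mulVec v, ⟨v, rfl⟩,
      by simp [Matrix.add_mulVec, Matrix.mulVecLin_apply]⟩
  calc (A + B).rank
      ≤ Module.finrank ℝ ((LinearMap.range A.mulVecLin ⊔
          LinearMap.range B.mulVecLin : Submodule ℝ (m → ℝ))) :=
        Submodule.finrank_mono hle
    _ ≤ A.rank + B.rank := Submodule.finrank_add_le_finrank_add_finrank _ _

theorem stmt12 (p q : ℕ)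
    (A B C D : Matrix (Fin (2 * p) ⊕ Fin q) (Fin (2 * p) ⊕ Fin q) ℤ)
    (hg : (Matrix.fromBlocks A B C D)ᵀ * Matrix.fromBlocks 0 1 1 0 * Matrix.fromBlocks A B C D
      = Matrix.fromBlocks 0 1 1 0)
    (hdet : (Matrix.fromBlocks A B C D).det = 1)
    (hC12 : C.toBlocks₁₂ = 0) (hC22 : C.toBlocks₂₂ = 0)
    (Z : Matrix (Fin (2 * p)) (Fin (2 * p)) ℝ) (hZ : Zᵀ = -Z)
    (hD11 : (D.map (Int.cast : ℤ → ℝ)).toBlocks₁₁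
      = -((C.map (Int.cast : ℤ → ℝ)).toBlocks₁₁ * Z))
    (hD21 : (D.map (Int.cast : ℤ → ℝ)).toBlocks₂₁
      = -((C.map (Int.cast : ℤ → ℝ)).toBlocks₂₁ * Z))
    (hex : ∃ θ : Matrix (Fin (2 * p) ⊕ Fin q) (Fin (2 * p) ⊕ Fin q) ℝ, θᵀ = -θ ∧
      IsUnit (C.map (Int.cast : ℤ → ℝ) * θ + D.map (Int.cast : ℤ → ℝ))) :
    (∀ Z' : Matrix (Fin (2 * p)) (Fin (2 * p)) ℝ, Z'ᵀ = -Z' →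
      (D.map (Int.cast : ℤ → ℝ)).toBlocks₁₁
          = -((C.map (Int.cast : ℤ → ℝ)).toBlocks₁₁ * Z') →
      (D.map (Int.cast : ℤ → ℝ)).toBlocks₂₁
          = -((C.map (Int.cast : ℤ → ℝ)).toBlocks₂₁ * Z') →
      Z' = Z) ∧
    ∀ i j, ∃ r : ℚ, Z i j = (r : ℝ) := by
  obtain ⟨θ, -, hθu⟩ := hex
  set Cr := C.map (Int.cast : ℤ → ℝ) with hCrdef
  set Dr := D.map (Int.cast : ℤ → ℝ) with hDrdef
  have hCz : ∀ i j, C i (Sum.inr j) = 0 := by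
    rintro (i | i) j
    · exact congrFun (congrFun hC12 i) j
    · exact congrFun (congrFun hC22 i) j
  set C0 : Matrix (Fin (2 * p) ⊕ Fin q) (Fin (2 * p)) ℤ := Matrix.of fun i j => C i (Sum.inl j)
    with hC0def
  set D0 : Matrix (Fin (2 * p) ⊕ Fin q) (Fin (2 * p)) ℤ := Matrix.of fun i j => D i (Sum.inl j)
    with hD0def
  set Ch : Matrix (Fin (2 * p) ⊕ Fin q) (Fin (2 * p)) ℝ := C0.map (Int.cast : ℤ → ℝ) with hChdef
  set Dh : Matrix (Fin (2 * p) ⊕ Fin q) (Fin (2 * p)) ℝ := D0.map (Int.cast : ℤ → ℝ) with hDhdef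
  -- block hypotheses give `Ch * W = -Dh`
  have key : ∀ W : Matrix (Fin (2 * p)) (Fin (2 * p)) ℝ,
      Dr.toBlocks₁₁ = -(Cr.toBlocks₁₁ * W) → Dr.toBlocks₂₁ = -(Cr.toBlocks₂₁ * W) →
      Ch * W = -Dh := by
    intro W h1 h2
    ext i j
    cases i with
    | inl i =>
      have := congrFun (congrFun h1 i) j
      simpa [Matrix.toBlocks₁₁, Matrix.mul_apply, Cr, Dr, Ch, Dh, C0, D0,
        eq_comm, neg_eq_iff_eq_neg] using this.symm
    | inr i =>
      have := congrFun (congrFun h2 i) j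
      simpa [Matrix.toBlocks₂₁, Matrix.mul_apply, Cr, Dr, Ch, Dh, C0, D0,
        eq_comm, neg_eq_iff_eq_neg] using this.symm
  have hCZ : Ch * Z = -Dh := key Z hD11 hD21
  -- decomposition of `Cr * θ + Dr`
  set P : Matrix (Fin (2 * p)) (Fin (2 * p) ⊕ Fin q) ℝ :=
    Matrix.of fun j k => θ (Sum.inl j) k - Sum.elim (fun j' => Z j j') (fun _ => 0) k with hPdef
  set Rm : Matrix (Fin (2 * p) ⊕ Fin q) (Fin q) ℝ := Matrix.of fun i j => Dr i (Sum.inr j)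
    with hRmdef
  set S : Matrix (Fin q) (Fin (2 * p) ⊕ Fin q) ℝ :=
    Matrix.of fun j k => Sum.elim (fun _ => (0 : ℝ)) (fun j' => if j = j' then 1 else 0) k
    with hSdef
  have hCrθ : ∀ i k, (Cr * θ) i k = ∑ j, Ch i j * θ (Sum.inl j) k := by
    intro i k
    rw [Matrix.mul_apply, Fintype.sum_sum_type]
    simp [Cr, Ch, C0, hCz]
  have hM : Cr * θ + Dr = Ch * P + Rm * S := by
    ext i k
    cases k with
    | inl j' =>
      have h1 := congrFun (congrFun hCZ i) j'
      simp only [Matrix.mul_apply, Matrix.neg_apply, Dh, Matrix.map_apply, D0,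
        Matrix.of_apply] at h1
      simp only [Matrix.add_apply, Matrix.mul_apply, hPdef, hSdef, hRmdef, Matrix.of_apply,
        Sum.elim_inl, mul_sub, mul_zero, Finset.sum_sub_distrib, Finset.sum_const_zero,
        add_zero, hCrθ i (Sum.inl j'), Dr, Matrix.map_apply]
      rw [h1]
      ring
    | inr j' =>
      simp only [Matrix.add_apply, Matrix.mul_apply, hPdef, hSdef, hRmdef, Matrix.of_apply,
        Sum.elim_inr, mul_ite, mul_one, mul_zero, sub_zero, Finset.sum_ite_eq',
        Finset.mem_univ, if_true, hCrθ i (Sum.inr j')]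
  -- rank computation
  have hrankM : (Cr * θ + Dr).rank = 2 * p + q := by
    rw [Matrix.rank_of_isUnit _ hθu]
    simp
  have hrankCh : Ch.rank = 2 * p := by
    have h1 : (Ch * P + Rm * S).rank ≤ Ch.rank + q := by
      refine le_trans (matrix_rank_add_le' _ _) (add_le_add (Matrix.rank_mul_le_left _ _) ?_)
      exact le_trans (Matrix.rank_mul_le_left _ _) (by simpa using Matrix.rank_le_card_width Rm)
    have h2 : Ch.rank ≤ 2 * p := by simpa using Matrix.rank_le_card_width Ch
    rw [hM] at hrankM
    omega
  -- injectivity of Ch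
  have hker : LinearMap.ker Ch.mulVecLin = ⊥ := by
    have h4 := LinearMap.finrank_range_add_finrank_ker Ch.mulVecLin
    rw [Module.finrank_fintype_fun_eq_card] at h4
    have h5 : Module.finrank ℝ (LinearMap.range Ch.mulVecLin) = 2 * p := hrankCh
    rw [h5] at h4
    simp only [Fintype.card_fin] at h4
    have h6 : Module.finrank ℝ (LinearMap.ker Ch.mulVecLin) = 0 := by omega
    exact Submodule.finrank_eq_zero.mp h6
  have hinj : ∀ v, Ch *ᵥ v = 0 → v = 0 := by
    intro v hv
    have : v ∈ LinearMap.ker Ch.mulVecLin := hv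
    rw [hker] at this
    simpa using this
  have hcancel : ∀ W W' : Matrix (Fin (2 * p)) (Fin (2 * p)) ℝ, Ch * W = Ch * W' → W = W' := by
    intro W W' h
    ext k j
    have hv : Ch *ᵥ (fun k => W k j - W' k j) = 0 := by
      funext i
      have := congrFun (congrFun h i) j
      simp only [Matrix.mul_apply] at this
      simp [Matrix.mulVec, dotProduct, mul_sub, Finset.sum_sub_distrib, this]
    have := congrFun (hinj _ hv) k
    simpa [sub_eq_zero] using this
  constructor
  · -- uniqueness
    intro Z' hZ' h1 h2
    exact hcancel Z' Z (by rw [key Z' h1 h2, hCZ])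
  · -- rationality
    have hGinj : ∀ v, (Chᵀ * Ch) *ᵥ v = 0 → v = 0 := by
      intro v hv
      apply hinj
      have hdp : (Ch *ᵥ v) ⬝ᵥ (Ch *ᵥ v) = 0 := by
        calc (Ch *ᵥ v) ⬝ᵥ (Ch *ᵥ v) = (v ᵥ* Chᵀ) ⬝ᵥ (Ch *ᵥ v) := by
              rw [Matrix.vecMul_transpose]
          _ = v ⬝ᵥ (Chᵀ *ᵥ (Ch *ᵥ v)) := (Matrix.dotProduct_mulVec _ _ _).symm
          _ = v ⬝ᵥ ((Chᵀ * Ch) *ᵥ v) := by rw [Matrix.mulVec_mulVec]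
          _ = 0 := by rw [hv, dotProduct_zero]
      exact dotProduct_self_eq_zero.mp hdp
    have hGdet : (Chᵀ * Ch).det ≠ 0 := by
      intro h
      obtain ⟨v, hv0, hv⟩ := (Matrix.exists_mulVec_eq_zero_iff).mpr h
      exact hv0 (hGinj v hv)
    set G0 : Matrix (Fin (2 * p)) (Fin (2 * p)) ℤ := C0ᵀ * C0 with hG0def
    set N0 : Matrix (Fin (2 * p)) (Fin (2 * p)) ℤ := -(C0ᵀ * D0) with hN0def
    have hG : Chᵀ * Ch = G0.map (Int.cast : ℤ → ℝ) := by
      ext i j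
      simp only [Matrix.mul_apply, Matrix.transpose_apply, Matrix.map_apply, Ch, G0]
      push_cast
      rfl
    have hGZ : (Chᵀ * Ch) * Z = N0.map (Int.cast : ℤ → ℝ) := by
      rw [Matrix.mul_assoc, hCZ]
      ext i j
      simp only [Matrix.mul_apply, Matrix.transpose_apply, Matrix.map_apply, Ch, Dh, N0,
        Matrix.neg_apply, mul_neg]
      push_cast
      rw [Finset.sum_neg_distrib]
    have hmdR : (G0.map (Int.cast : ℤ → ℝ)).det = ((G0.det : ℤ) : ℝ) := by
      have h := RingHom.map_det (Int.castRingHom ℝ) G0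
      simpa [RingHom.mapMatrix_apply] using h.symm
    have hG0det : G0.det ≠ 0 := by
      intro h
      apply hGdet
      rw [hG, hmdR, h]
      simp
    set Gq : Matrix (Fin (2 * p)) (Fin (2 * p)) ℚ := G0.map (Int.cast : ℤ → ℚ) with hGqdef
    set Nq : Matrix (Fin (2 * p)) (Fin (2 * p)) ℚ := N0.map (Int.cast : ℤ → ℚ) with hNqdef
    have hmdQ : Gq.det = ((G0.det : ℤ) : ℚ) := by
      have h := RingHom.map_det (Int.castRingHom ℚ) G0
      simpa [RingHom.mapMatrix_apply, hGqdef] using h.symm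
    have hGqdet : IsUnit Gq.det := by
      rw [isUnit_iff_ne_zero, hmdQ]
      exact_mod_cast hG0det
    set Zq : Matrix (Fin (2 * p)) (Fin (2 * p)) ℚ := Gq⁻¹ * Nq with hZqdef
    have hq : Gq * Zq = Nq := by
      rw [hZqdef, ← Matrix.mul_assoc, Matrix.mul_nonsing_inv _ hGqdet, Matrix.one_mul]
    have hmapGq : Gq.map (Rat.cast : ℚ → ℝ) = Chᵀ * Ch := by
      rw [hG]
      ext i j
      simp [hGqdef, Matrix.map_apply]
    have hmapNq : Nq.map (Rat.cast : ℚ → ℝ) = N0.map (Int.cast : ℤ → ℝ) := by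
      ext i j
      simp [hNqdef, Matrix.map_apply]
    have hreal : (Chᵀ * Ch) * (Zq.map (Rat.cast : ℚ → ℝ)) = (Chᵀ * Ch) * Z := by
      rw [hGZ, ← hmapNq, ← hq, ← hmapGq]
      exact (Matrix.map_mul (f := (Rat.castHom ℝ : ℚ →+* ℝ))).symm
    have hfinal : Zq.map (Rat.cast : ℚ → ℝ) = Z := by
      have h1 := Matrix.nonsing_inv_mul_cancel_left (Chᵀ * Ch) (Zq.map (Rat.cast : ℚ → ℝ))
        (isUnit_iff_ne_zero.mpr hGdet)
      have h2 := Matrix.nonsing_inv_mul_cancel_left (Chᵀ * Ch) Z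
        (isUnit_iff_ne_zero.mpr hGdet)
      rw [← h1, hreal, h2]
    intro i j
    exact ⟨Zq i j, by rw [← hfinal]; rfl⟩
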